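/- For the general scallop family with entropy S(c) = ((1-nc)²/2) H(p(c)), the derivative satisfies dS/dc = n((n+2)c - 1) ln(1-p) + 2n(1 - (n+1)c) ln(p). If 1/(n+2) < c < 1/(n+1) and 0 < p < 1, then dS/dc < 0. -/

import Mathlib

/-- Binary entropy function. -/
noncomputable def H (u : ℝ) : ℝ := -(u * Real.log u + (1 - u) * Real.log (1 - u))

set_option maxHeartbeats 1600000 in
theorem general_scallop_entropy_derivative
    (n : ℕ) (hn : 1 ≤ n) (e : ℝ) (p S : ℝ → ℝ)
    (hp : p = fun c => (2/(1-(n:ℝ)*c)^2) * (e + (n:ℝ)*c^2 - 1 + (1-(n:ℝ)*c)^2))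
    (hS : S = fun c => ((1-(n:ℝ)*c)^2/2) * H (p c))
    (c : ℝ) (hc : 1 - (n:ℝ)*c ≠ 0) (hpc : p c ∈ Set.Ioo (0:ℝ) 1) :
    HasDerivAt S ((n:ℝ)*(((n:ℝ)+2)*c - 1) * Real.log (1 - p c)
        + 2*(n:ℝ)*(1 - ((n:ℝ)+1)*c) * Real.log (p c)) c ∧
    (1/((n:ℝ)+2) < c → c < 1/((n:ℝ)+1) →
      (n:ℝ)*(((n:ℝ)+2)*c - 1) * Real.log (1 - p c)
        + 2*(n:ℝ)*(1 - ((n:ℝ)+1)*c) * Real.log (p c) < 0) := by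
  obtain ⟨hp0, hp1⟩ := hpc
  have hn' : (1:ℝ) ≤ (n:ℝ) := by exact_mod_cast hn
  have hq : ((1-(n:ℝ)*c)^2) ≠ 0 := pow_ne_zero 2 hc
  have hpne : p c ≠ 0 := ne_of_gt hp0
  have h1p : (1:ℝ) - p c ≠ 0 := by linarith
  constructor
  · -- derivative of p
    have hlin : HasDerivAt (fun x : ℝ => 1 - (n:ℝ)*x) (-(n:ℝ)) c := by
      simpa using ((hasDerivAt_id c).const_mul (n:ℝ)).const_sub 1
    have hqd : HasDerivAt (fun x : ℝ => (1-(n:ℝ)*x)^2)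
        ((2:ℕ) * (1-(n:ℝ)*c)^1 * (-(n:ℝ))) c := hlin.pow 2
    have hAd : HasDerivAt (fun x : ℝ => e + (n:ℝ)*x^2 - 1)
        ((n:ℝ) * ((2:ℕ) * c^1)) c := by
      exact (((hasDerivAt_pow 2 c).const_mul (n:ℝ)).const_add e).sub_const 1
    have hnum : HasDerivAt (fun x : ℝ => e + (n:ℝ)*x^2 - 1 + (1-(n:ℝ)*x)^2)
        ((n:ℝ) * ((2:ℕ) * c^1) + (2:ℕ) * (1-(n:ℝ)*c)^1 * (-(n:ℝ))) c := hAd.add hqd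
    have hfrac : HasDerivAt (fun x : ℝ => 2/(1-(n:ℝ)*x)^2)
        ((0 * (1-(n:ℝ)*c)^2 - 2 * ((2:ℕ) * (1-(n:ℝ)*c)^1 * (-(n:ℝ)))) / ((1-(n:ℝ)*c)^2)^2) c :=
      (hasDerivAt_const c (2:ℝ)).div hqd hq
    set P' : ℝ := (0 * (1-(n:ℝ)*c)^2 - 2 * ((2:ℕ) * (1-(n:ℝ)*c)^1 * (-(n:ℝ)))) / ((1-(n:ℝ)*c)^2) ^ 2
        * (e + (n:ℝ)*c^2 - 1 + (1-(n:ℝ)*c)^2)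
      + 2/(1-(n:ℝ)*c)^2 * ((n:ℝ) * ((2:ℕ) * c^1) + (2:ℕ) * (1-(n:ℝ)*c)^1 * (-(n:ℝ))) with hP'
    have hpd : HasDerivAt p P' c := by
      rw [hp]; exact hfrac.mul hnum
    -- derivative of the simplified function g
    have hlogp : HasDerivAt (fun x : ℝ => Real.log (p x)) (P' / p c) c := hpd.log hpne
    have hlog1p : HasDerivAt (fun x : ℝ => Real.log (1 - p x)) ((0 - P') / (1 - p c)) c :=
      ((hasDerivAt_const c (1:ℝ)).sub hpd).log h1p
    have hco1 : HasDerivAt (fun x : ℝ => e + (n:ℝ)*x^2 - 1 + (1-(n:ℝ)*x)^2/2)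
        ((n:ℝ) * ((2:ℕ) * c^1) + (2:ℕ) * (1-(n:ℝ)*c)^1 * (-(n:ℝ)) / 2) c :=
      hAd.add (hqd.div_const 2)
    have hg : HasDerivAt
        (fun x : ℝ => (e + (n:ℝ)*x^2 - 1 + (1-(n:ℝ)*x)^2/2) * Real.log (1 - p x)
          - (e + (n:ℝ)*x^2 - 1 + (1-(n:ℝ)*x)^2) * Real.log (p x))
        ((((n:ℝ) * ((2:ℕ) * c^1) + (2:ℕ) * (1-(n:ℝ)*c)^1 * (-(n:ℝ)) / 2) * Real.log (1 - p c)
          + (e + (n:ℝ)*c^2 - 1 + (1-(n:ℝ)*c)^2/2) * ((0 - P') / (1 - p c)))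
         - (((n:ℝ) * ((2:ℕ) * c^1) + (2:ℕ) * (1-(n:ℝ)*c)^1 * (-(n:ℝ))) * Real.log (p c)
          + (e + (n:ℝ)*c^2 - 1 + (1-(n:ℝ)*c)^2) * (P' / p c))) c :=
      (hco1.mul hlog1p).sub (hnum.mul hlogp)
    -- S agrees with g near c
    have hev : ∀ᶠ x in nhds c, 1 - (n:ℝ)*x ≠ 0 := by
      have hcont : Continuous (fun x : ℝ => 1 - (n:ℝ)*x) := by continuity
      exact hcont.continuousAt.eventually_ne hc
    have hSg : S =ᶠ[nhds c]
        (fun x : ℝ => (e + (n:ℝ)*x^2 - 1 + (1-(n:ℝ)*x)^2/2) * Real.log (1 - p x)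
          - (e + (n:ℝ)*x^2 - 1 + (1-(n:ℝ)*x)^2) * Real.log (p x)) := by
      filter_upwards [hev] with x hx
      have hqx : ((1-(n:ℝ)*x)^2) ≠ 0 := pow_ne_zero 2 hx
      have hpx : p x = (2/(1-(n:ℝ)*x)^2) * (e + (n:ℝ)*x^2 - 1 + (1-(n:ℝ)*x)^2) := by rw [hp]
      rw [hS]
      simp only [H, hpx]
      field_simp
      ring
    have hSd : HasDerivAt S
        ((((n:ℝ) * ((2:ℕ) * c^1) + (2:ℕ) * (1-(n:ℝ)*c)^1 * (-(n:ℝ)) / 2) * Real.log (1 - p c)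
          + (e + (n:ℝ)*c^2 - 1 + (1-(n:ℝ)*c)^2/2) * ((0 - P') / (1 - p c)))
         - (((n:ℝ) * ((2:ℕ) * c^1) + (2:ℕ) * (1-(n:ℝ)*c)^1 * (-(n:ℝ))) * Real.log (p c)
          + (e + (n:ℝ)*c^2 - 1 + (1-(n:ℝ)*c)^2) * (P' / p c))) c :=
      hg.congr_of_eventuallyEq hSg
    convert hSd using 1
    -- now prove the two derivative expressions equal
    have hPc : p c * (1-(n:ℝ)*c)^2 = 2 * (e + (n:ℝ)*c^2 - 1 + (1-(n:ℝ)*c)^2) := by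
      rw [hp]; field_simp
    have key1 : e + (n:ℝ)*c^2 - 1 + (1-(n:ℝ)*c)^2 = p c * (1-(n:ℝ)*c)^2 / 2 := by
      linear_combination (-1/2 : ℝ) * hPc
    have key2 : e + (n:ℝ)*c^2 - 1 + (1-(n:ℝ)*c)^2/2 = -((1 - p c) * (1-(n:ℝ)*c)^2 / 2) := by
      linear_combination (-1/2 : ℝ) * hPc
    have heq1 : (e + (n:ℝ)*c^2 - 1 + (1-(n:ℝ)*c)^2/2) * ((0 - P') / (1 - p c))
        = (1-(n:ℝ)*c)^2 * P' / 2 := by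
      rw [key2]
      field_simp
      ring
    have heq2 : (e + (n:ℝ)*c^2 - 1 + (1-(n:ℝ)*c)^2) * (P' / p c)
        = (1-(n:ℝ)*c)^2 * P' / 2 := by
      rw [key1]
      field_simp
    rw [heq1, heq2]
    ring
  · intro h1 h2
    have hnp2 : (0:ℝ) < (n:ℝ)+2 := by linarith
    have hnp1 : (0:ℝ) < (n:ℝ)+1 := by linarith
    have hA : 1 < c * ((n:ℝ)+2) := (div_lt_iff₀ hnp2).mp h1
    have hB : c * ((n:ℝ)+1) < 1 := (lt_div_iff₀ hnp1).mp h2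
    have hL1 : Real.log (p c) < 0 := Real.log_neg hp0 hp1
    have hL2 : Real.log (1 - p c) < 0 := Real.log_neg (by linarith) (by linarith)
    have hx1 : (0:ℝ) < (n:ℝ)*(((n:ℝ)+2)*c - 1) :=
      mul_pos (by linarith) (by nlinarith [hA])
    have hx2 : (0:ℝ) < 2*(n:ℝ)*(1 - ((n:ℝ)+1)*c) := by
      have : (0:ℝ) < 1 - ((n:ℝ)+1)*c := by nlinarith [hB]
      positivity
    have t1 : (n:ℝ)*(((n:ℝ)+2)*c - 1) * Real.log (1 - p c) < 0 :=
      mul_neg_of_pos_of_neg hx1 hL2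
    have t2 : 2*(n:ℝ)*(1 - ((n:ℝ)+1)*c) * Real.log (p c) < 0 :=
      mul_neg_of_pos_of_neg hx2 hL1
    linarith
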